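/- Let X be a compact metric space and f : X → X a continuous map. Let U be a repelling region and R = Inv⁺(U) the associated repeller. Then Inv(X \ U) = {x ∈ X : there exists a backward orbit γ through x with α_o(γ) ∩ R = ∅}; in particular Inv(X \ U) is compact and invariant, and it depends only on R and not on the choice of repelling region U with R = Inv⁺(U). -/

import Mathlib

open Set

/-- The maximal invariant set in `U`: the union of all subsets `S ⊆ U` with `f '' S = S`. -/
def MaxInv {Y : Type*} (f : Y → Y) (U : Set Y) : Set Y :=
  ⋃₀ {S : Set Y | S ⊆ U ∧ f '' S = S}

/-- The maximal forward invariant set in `U`: the union of all subsets `S ⊆ U`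
with `f '' S ⊆ S`. -/
def MaxInvPlus {Y : Type*} (f : Y → Y) (U : Set Y) : Set Y :=
  ⋃₀ {S : Set Y | S ⊆ U ∧ f '' S ⊆ S}

/-- The omega-limit set `ω(U) = ⋂_{n ≥ 0} cl (⋃_{m ≥ n} f^[m] '' U)`. -/
def OmegaLim {Y : Type*} [TopologicalSpace Y] (f : Y → Y) (U : Set Y) : Set Y :=
  ⋂ n : ℕ, closure (⋃ m ≥ n, f^[m] '' U)

/-- The alpha-limit set `α(U) = ⋂_{n ≥ 0} cl (⋃_{m ≥ n} (f^[m]) ⁻¹' U)`. -/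
def AlphaLim {Y : Type*} [TopologicalSpace Y] (f : Y → Y) (U : Set Y) : Set Y :=
  ⋂ n : ℕ, closure (⋃ m ≥ n, f^[m] ⁻¹' U)

/-- A trapping region: a forward invariant set `U` with `f^[n] '' cl U ⊆ int U`
for some `n ≥ 1`. -/
def IsTrappingRegion {Y : Type*} [TopologicalSpace Y] (f : Y → Y) (U : Set Y) : Prop :=
  f '' U ⊆ U ∧ ∃ n : ℕ, 1 ≤ n ∧ f^[n] '' closure U ⊆ interior U

/-- An attractor: `A = Inv(U)` for some trapping region `U`. -/
def IsAttractor {Y : Type*} [TopologicalSpace Y] (f : Y → Y) (A : Set Y) : Prop :=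
  ∃ U : Set Y, IsTrappingRegion f U ∧ A = MaxInv f U

/-- An attracting neighborhood: `ω(U) ⊆ int U`. -/
def IsAttractingNbhd {Y : Type*} [TopologicalSpace Y] (f : Y → Y) (U : Set Y) : Prop :=
  OmegaLim f U ⊆ interior U

/-- A repelling region: a backward invariant set `U` with `(f^[n]) ⁻¹' cl U ⊆ int U`
for some `n ≥ 1`. -/
def IsRepellingRegion {Y : Type*} [TopologicalSpace Y] (f : Y → Y) (U : Set Y) : Prop :=
  f ⁻¹' U ⊆ U ∧ ∃ n : ℕ, 1 ≤ n ∧ f^[n] ⁻¹' closure U ⊆ interior U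

/-- A repeller: `R = Inv⁺(U)` for some repelling region `U`. -/
def IsRepeller {Y : Type*} [TopologicalSpace Y] (f : Y → Y) (R : Set Y) : Prop :=
  ∃ U : Set Y, IsRepellingRegion f U ∧ R = MaxInvPlus f U

/-- A repelling neighborhood: `α(U) ⊆ int U`. -/
def IsRepellingNbhd {Y : Type*} [TopologicalSpace Y] (f : Y → Y) (U : Set Y) : Prop :=
  AlphaLim f U ⊆ interior U

/-- A backward orbit: a sequence `γ : ℕ → Y` with `f (γ (k+1)) = γ k` for all `k`.
A backward orbit through `x` additionally satisfies `γ 0 = x`. -/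
def IsBackwardOrbit {Y : Type*} (f : Y → Y) (γ : ℕ → Y) : Prop :=
  ∀ k : ℕ, f (γ (k + 1)) = γ k

/-- The orbital alpha-limit set `α_o(γ) = ⋂_{n ≥ 0} cl {γ m : m ≥ n}`. -/
def OrbAlpha {Y : Type*} [TopologicalSpace Y] (γ : ℕ → Y) : Set Y :=
  ⋂ n : ℕ, closure (γ '' {m : ℕ | n ≤ m})

/-- The dual repeller of an attractor `A`: `A* = {x : ω(x) ∩ A = ∅}`. -/
def DualRepeller {Y : Type*} [TopologicalSpace Y] (f : Y → Y) (A : Set Y) : Set Y :=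
  {x : Y | OmegaLim f {x} ∩ A = ∅}

/-- The dual attractor of a repeller `R`:
`R* = {x : ∃ backward orbit γ through x with α_o(γ) ∩ R = ∅}`. -/
def DualAttractor {Y : Type*} [TopologicalSpace Y] (f : Y → Y) (R : Set Y) : Set Y :=
  {x : Y | ∃ γ : ℕ → Y, γ 0 = x ∧ IsBackwardOrbit f γ ∧ OrbAlpha γ ∩ R = ∅}

section Aux

variable {X : Type*} [MetricSpace X] [CompactSpace X] {f : X → X} {U : Set X}

lemma maxInv_subset' (f : X → X) (V : Set X) : MaxInv f V ⊆ V :=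
  sUnion_subset fun _ hS => hS.1

lemma maxInv_image' (f : X → X) (V : Set X) : f '' MaxInv f V = MaxInv f V := by
  apply subset_antisymm
  · rintro _ ⟨y, ⟨S, hS, hyS⟩, rfl⟩
    exact ⟨S, hS, by rw [← hS.2]; exact ⟨y, hyS, rfl⟩⟩
  · rintro y ⟨S, hS, hyS⟩
    rw [← hS.2] at hyS
    obtain ⟨z, hz, rfl⟩ := hyS
    exact ⟨z, ⟨S, hS, hz⟩, rfl⟩

lemma iter_preimage_subset (h : f ⁻¹' U ⊆ U) : ∀ j, f^[j] ⁻¹' U ⊆ U := by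
  intro j
  induction j with
  | zero => simp
  | succ n ih =>
    intro z hz
    simp only [mem_preimage, Function.iterate_succ_apply'] at hz
    exact ih (h hz)

lemma backOrbit_iter {γ : ℕ → X} (hγ : IsBackwardOrbit f γ) :
    ∀ m k, f^[m] (γ (k + m)) = γ k := by
  intro m
  induction m with
  | zero => intro k; simp
  | succ m ih =>
    intro k
    rw [Function.iterate_succ_apply]
    have : f (γ (k + (m + 1))) = γ (k + m) := hγ (k + m)
    rw [this, ih]

lemma mem_maxInvPlus' {x : X} : x ∈ MaxInvPlus f U ↔ ∀ k, f^[k] x ∈ U := by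
  constructor
  · rintro ⟨S, ⟨hSU, hSf⟩, hx⟩ k
    have : ∀ j, f^[j] x ∈ S := by
      intro j
      induction j with
      | zero => simpa
      | succ n ih =>
        rw [Function.iterate_succ_apply']
        exact hSf ⟨_, ih, rfl⟩
    exact hSU (this k)
  · intro h
    refine ⟨{y | ∀ k, f^[k] y ∈ U}, ⟨fun y hy => hy 0, ?_⟩, h⟩
    rintro _ ⟨y, hy, rfl⟩ k
    rw [← Function.iterate_succ_apply]
    exact hy (k + 1)

lemma mem_maxInv' {V : Set X} {x : X} :
    x ∈ MaxInv f V ↔ ∃ γ : ℕ → X, γ 0 = x ∧ IsBackwardOrbit f γ ∧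
      (∀ m, γ m ∈ V) ∧ ∀ k, f^[k] x ∈ V := by
  constructor
  · rintro ⟨S, ⟨hSV, hSf⟩, hx⟩
    have hfwd : ∀ j, f^[j] x ∈ S := by
      intro j
      induction j with
      | zero => simpa
      | succ n ih =>
        rw [Function.iterate_succ_apply', ← hSf]
        exact ⟨_, ih, rfl⟩
    have hpre : ∀ p : S, ∃ q : S, f (q : X) = (p : X) := by
      rintro ⟨y, hy⟩
      rw [← hSf] at hy
      obtain ⟨z, hz, hfz⟩ := hy
      exact ⟨⟨z, hz⟩, hfz⟩
    choose F hF using hpre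
    refine ⟨fun m => (F^[m] ⟨x, hx⟩ : X), rfl, ?_, fun m => hSV (F^[m] ⟨x, hx⟩).2,
      fun k => hSV (hfwd k)⟩
    intro k
    show f ((F^[k + 1] ⟨x, hx⟩ : X)) = ((F^[k] ⟨x, hx⟩ : X))
    rw [Function.iterate_succ_apply', hF]
  · rintro ⟨γ, h0, hγ, hγV, hfV⟩
    refine ⟨(range γ) ∪ (range fun k => f^[k] x), ⟨?_, ?_⟩, Or.inl ⟨0, h0⟩⟩
    · rintro y (⟨m, rfl⟩ | ⟨k, rfl⟩)
      exacts [hγV m, hfV k]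
    · apply subset_antisymm
      · rintro _ ⟨y, (⟨m, rfl⟩ | ⟨k, rfl⟩), rfl⟩
        · cases m with
          | zero =>
            refine Or.inr ⟨1, ?_⟩
            show f^[1] x = f (γ 0)
            rw [h0, Function.iterate_one]
          | succ m' => exact Or.inl ⟨m', (hγ m').symm⟩
        · refine Or.inr ⟨k + 1, ?_⟩
          show f^[k + 1] x = f (f^[k] x)
          rw [Function.iterate_succ_apply']
      · rintro y (⟨m, rfl⟩ | ⟨k, rfl⟩)
        · exact ⟨γ (m + 1), Or.inl ⟨m + 1, rfl⟩, hγ m⟩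
        · cases k with
          | zero =>
            refine ⟨γ 1, Or.inl ⟨1, rfl⟩, ?_⟩
            show f (γ 1) = f^[0] x
            rw [hγ 0, h0, Function.iterate_zero_apply]
          | succ k' =>
            refine ⟨f^[k'] x, Or.inr ⟨k', rfl⟩, ?_⟩
            show f (f^[k'] x) = f^[k' + 1] x
            rw [Function.iterate_succ_apply']

lemma maxInvPlus_subset_interior (hU : IsRepellingRegion f U) :
    MaxInvPlus f U ⊆ interior U := by
  obtain ⟨-, n, -, hn⟩ := hU
  intro y hy
  exact hn (subset_closure (mem_maxInvPlus'.mp hy n))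

lemma orbAlpha_subset_closure (γ : ℕ → X) (k : ℕ) :
    OrbAlpha γ ⊆ closure (γ '' {m | k ≤ m}) := iInter_subset _ k

lemma orbAlpha_nonempty (γ : ℕ → X) : (OrbAlpha γ).Nonempty := by
  apply IsCompact.nonempty_iInter_of_sequence_nonempty_isCompact_isClosed
  · intro i
    exact closure_mono (image_mono (fun m hm => le_of_lt (Nat.lt_of_lt_of_le (Nat.lt_succ_self i) hm)))
  · intro i
    exact ⟨γ i, subset_closure ⟨i, le_refl i, rfl⟩⟩
  · exact isClosed_closure.isCompact
  · intro i; exact isClosed_closure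

lemma orbAlpha_fwd (hf : Continuous f) {γ : ℕ → X} (hγ : IsBackwardOrbit f γ) :
    f '' OrbAlpha γ ⊆ OrbAlpha γ := by
  rintro _ ⟨y, hy, rfl⟩
  rw [OrbAlpha, mem_iInter]
  intro n
  have h1 : y ∈ closure (γ '' {m | n + 1 ≤ m}) := mem_iInter.mp hy (n + 1)
  have h2 : f '' (γ '' {m | n + 1 ≤ m}) ⊆ γ '' {m | n ≤ m} := by
    rintro _ ⟨_, ⟨m, hm, rfl⟩, rfl⟩
    have hm2 : n + 1 ≤ m := hm
    obtain ⟨m', rfl⟩ : ∃ m', m = m' + 1 := ⟨m - 1, by omega⟩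
    exact ⟨m', show n ≤ m' by omega, (hγ m').symm⟩
  exact closure_mono h2 (image_closure_subset_closure_image hf ⟨y, h1, rfl⟩)

lemma orbAlpha_fwd_iter (hf : Continuous f) {γ : ℕ → X} (hγ : IsBackwardOrbit f γ)
    {y : X} (hy : y ∈ OrbAlpha γ) : ∀ j, f^[j] y ∈ OrbAlpha γ := by
  intro j
  induction j with
  | zero => simpa
  | succ n ih =>
    rw [Function.iterate_succ_apply']
    exact orbAlpha_fwd hf hγ ⟨_, ih, rfl⟩

lemma tail_absurd (hf : Continuous f) (hU : IsRepellingRegion f U)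
    {γ : ℕ → X} (hγ : IsBackwardOrbit f γ) (hRγ : OrbAlpha γ ∩ MaxInvPlus f U = ∅)
    {k : ℕ} (hk : ∀ m, k ≤ m → γ m ∈ U) : False := by
  obtain ⟨hback, n, hn1, hn⟩ := hU
  have hcl : OrbAlpha γ ⊆ closure U :=
    (orbAlpha_subset_closure γ k).trans
      (closure_mono (by rintro _ ⟨m, hm, rfl⟩; exact hk m hm))
  have hsubU : OrbAlpha γ ⊆ U := by
    intro y hy
    have : f^[n] y ∈ closure U := hcl (orbAlpha_fwd_iter hf hγ hy n)
    exact interior_subset (hn this)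
  have hsubR : OrbAlpha γ ⊆ MaxInvPlus f U :=
    subset_sUnion_of_mem ⟨hsubU, orbAlpha_fwd hf hγ⟩
  obtain ⟨y, hy⟩ := orbAlpha_nonempty γ
  exact absurd hRγ (by rw [← ne_eq, ← nonempty_iff_ne_empty]; exact ⟨y, hy, hsubR hy⟩)

lemma dual_eq (hf : Continuous f) (hU : IsRepellingRegion f U) :
    MaxInv f Uᶜ = DualAttractor f (MaxInvPlus f U) := by
  ext x
  constructor
  · intro hx
    obtain ⟨γ, h0, hγ, hγV, hfwd⟩ := mem_maxInv'.mp hx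
    refine ⟨γ, h0, hγ, ?_⟩
    have h1 : OrbAlpha γ ⊆ (interior U)ᶜ := by
      refine (orbAlpha_subset_closure γ 0).trans ?_
      rw [← closure_compl]
      exact closure_mono (by rintro _ ⟨m, -, rfl⟩; exact hγV m)
    rw [eq_empty_iff_forall_notMem]
    rintro y ⟨hy1, hy2⟩
    exact h1 hy1 (maxInvPlus_subset_interior hU hy2)
  · rintro ⟨γ, h0, hγ, hR⟩
    refine mem_maxInv'.mpr ⟨γ, h0, hγ, ?_, ?_⟩
    · intro m
      by_contra hm
      rw [mem_compl_iff, not_not] at hm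
      refine tail_absurd hf hU hγ hR (k := m) ?_
      intro m' hm'
      have h2 : f^[m' - m] (γ m') = γ m := by
        have h3 := backOrbit_iter hγ (m' - m) m
        rwa [Nat.add_sub_cancel' hm'] at h3
      exact iter_preimage_subset hU.1 (m' - m) (by rw [mem_preimage, h2]; exact hm)
    · intro j
      by_contra hj
      rw [mem_compl_iff, not_not] at hj
      refine tail_absurd hf hU hγ hR (k := 0) ?_
      intro m _
      have h2 : f^[m] (γ m) = x := by
        have h3 := backOrbit_iter hγ m 0
        rwa [Nat.zero_add, h0] at h3
      have h4 : f^[j + m] (γ m) ∈ U := by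
        rw [Function.iterate_add_apply, h2]; exact hj
      exact iter_preimage_subset hU.1 (j + m) h4

lemma invariant_subset_compl (hU : IsRepellingRegion f U) {S : Set X}
    (hS : f '' S = S) (hSc : S ⊆ (interior U)ᶜ) : S ⊆ Uᶜ := by
  obtain ⟨-, n, -, hn⟩ := hU
  have him : ∀ j, f^[j] '' S = S := by
    intro j
    induction j with
    | zero => simp
    | succ m ih =>
      rw [Function.iterate_succ, Set.image_comp, hS, ih]
  intro y hy hyU
  obtain ⟨z, hz, hfz⟩ := (him n).symm.subset hy
  have : z ∈ interior U := hn (by rw [mem_preimage, hfz]; exact subset_closure hyU)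
  exact hSc hz this

lemma maxInv_closed (hf : Continuous f) (hU : IsRepellingRegion f U) :
    IsClosed (MaxInv f Uᶜ) := by
  set S := MaxInv f Uᶜ with hSdef
  have hS : f '' S = S := maxInv_image' f Uᶜ
  have h1 : f '' closure S = closure S := by
    apply subset_antisymm
    · exact (image_closure_subset_closure_image hf).trans (by rw [hS])
    · have hcpt : IsCompact (f '' closure S) := (isClosed_closure.isCompact).image hf
      refine hcpt.isClosed.closure_subset_iff.mpr ?_
      nth_rewrite 1 [← hS]
      exact image_mono (f := f) subset_closure
  have h2 : closure S ⊆ (interior U)ᶜ := by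
    rw [← closure_compl]
    exact closure_mono (maxInv_subset' f Uᶜ)
  have h3 : closure S ⊆ Uᶜ := invariant_subset_compl hU h1 h2
  exact isClosed_of_closure_subset (subset_sUnion_of_mem ⟨h3, h1⟩)

end Aux

/-- Properties of the dual attractor `Inv(X \ U)` of a repeller. -/
theorem dual_attractor_properties
    {X : Type*} [MetricSpace X] [CompactSpace X]
    (f : X → X) (hf : Continuous f) (U R : Set X)
    (hU : IsRepellingRegion f U) (hR : R = MaxInvPlus f U) :
    MaxInv f Uᶜ = DualAttractor f R ∧
    IsCompact (MaxInv f Uᶜ) ∧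
    f '' MaxInv f Uᶜ = MaxInv f Uᶜ ∧
    (∀ U' : Set X, IsRepellingRegion f U' → R = MaxInvPlus f U' →
      MaxInv f U'ᶜ = MaxInv f Uᶜ) := by
  have key := dual_eq hf hU
  refine ⟨by rw [key, hR], (maxInv_closed hf hU).isCompact, maxInv_image' f Uᶜ, ?_⟩
  intro U' hU' hR'
  rw [dual_eq hf hU', dual_eq hf hU, ← hR, ← hR']
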